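/- Let P be a quartic polynomial with Discr_x(P) ≠ 0 and Q = (1/3)P P'' - (1/4)(P')^2. Then P and [P,Q] = P'Q - PQ' have no common root; equivalently, Res_x(P, [P,Q]) ≠ 0. -/

import Mathlib

open Polynomial

/-- The usual discriminant of the quartic `a0 x^4 + a1 x^3 + a2 x^2 + a3 x + a4`. -/
def discQuartic {K : Type*} [Field K] (a0 a1 a2 a3 a4 : K) : K :=
  256 * a0 ^ 3 * a4 ^ 3 - 192 * a0 ^ 2 * a1 * a3 * a4 ^ 2 - 128 * a0 ^ 2 * a2 ^ 2 * a4 ^ 2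
    + 144 * a0 ^ 2 * a2 * a3 ^ 2 * a4 - 27 * a0 ^ 2 * a3 ^ 4 + 144 * a0 * a1 ^ 2 * a2 * a4 ^ 2
    - 6 * a0 * a1 ^ 2 * a3 ^ 2 * a4 - 80 * a0 * a1 * a2 ^ 2 * a3 * a4
    + 18 * a0 * a1 * a2 * a3 ^ 3 + 16 * a0 * a2 ^ 4 * a4 - 4 * a0 * a2 ^ 3 * a3 ^ 2
    - 27 * a1 ^ 4 * a4 ^ 2 + 18 * a1 ^ 3 * a2 * a3 * a4 - 4 * a1 ^ 3 * a3 ^ 3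
    - 4 * a1 ^ 2 * a2 ^ 3 * a4 + a1 ^ 2 * a2 ^ 2 * a3 ^ 2

/-- If `P` is a quartic with nonzero discriminant and
`Q = (1/3) P P'' - (1/4)(P')^2`, then `P` and `[P,Q] = P'Q - PQ'` have no common root. -/
lemma double_root_disc_zero {K : Type*} [Field K] (P : K[X]) (r : K)
    (hdeg : P.natDegree = 4) (h0 : P.eval r = 0) (h1 : (derivative P).eval r = 0) :
    discQuartic (P.coeff 4) (P.coeff 3) (P.coeff 2) (P.coeff 1) (P.coeff 0) = 0 := by
  obtain ⟨P1, hP1⟩ := (dvd_iff_isRoot.mpr h0 : (X - C r) ∣ P)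
  have hP1r : P1.eval r = 0 := by
    have := congrArg (fun p => (derivative p).eval r) hP1
    simp [derivative_mul, eval_add, eval_mul, h1] at this
    exact this.symm
  obtain ⟨P2, hP2⟩ := (dvd_iff_isRoot.mpr hP1r : (X - C r) ∣ P1)
  have hP : P = (X - C r)^2 * P2 := by rw [hP1, hP2]; ring
  have hP2ne : P2 ≠ 0 := by
    rintro rfl; rw [mul_zero] at hP; rw [hP] at hdeg; simp at hdeg
  have hd2 : P2.natDegree = 2 := by
    have := hdeg
    rw [hP, natDegree_mul (pow_ne_zero _ (X_sub_C_ne_zero r)) hP2ne] at this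
    simp [natDegree_pow] at this
    omega
  set p := P2.coeff 2 with hp
  set q := P2.coeff 1 with hq
  set w := P2.coeff 0 with hw
  have hP2e : P2 = C p * X^2 + C q * X + C w := by
    ext n
    rcases n with _ | _ | _ | n <;>
      simp [coeff_add, coeff_C_mul, coeff_X_pow, coeff_C, hp, hq, hw]
    exact coeff_eq_zero_of_natDegree_lt (by omega)
  have hPe : P = C p * X^4 + C (q - 2*r*p) * X^3 + C (w - 2*r*q + r^2*p) * X^2
      + C (r^2*q - 2*r*w) * X + C (r^2*w) := by
    rw [hP, hP2e]
    simp only [map_sub, map_add, map_mul, map_pow, map_ofNat]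
    ring
  have c4 : P.coeff 4 = p := by rw [hPe]; simp only [coeff_add, coeff_C_mul, coeff_X_pow, coeff_C, coeff_X]; norm_num
  have c3 : P.coeff 3 = q - 2*r*p := by rw [hPe]; simp only [coeff_add, coeff_C_mul, coeff_X_pow, coeff_C, coeff_X]; norm_num
  have c2 : P.coeff 2 = w - 2*r*q + r^2*p := by rw [hPe]; simp only [coeff_add, coeff_C_mul, coeff_X_pow, coeff_C, coeff_X]; norm_num
  have c1 : P.coeff 1 = r^2*q - 2*r*w := by rw [hPe]; simp only [coeff_add, coeff_C_mul, coeff_X_pow, coeff_C, coeff_X]; norm_num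
  have c0 : P.coeff 0 = r^2*w := by rw [hPe]; simp only [coeff_add, coeff_C_mul, coeff_X_pow, coeff_C, coeff_X]; norm_num
  rw [c4, c3, c2, c1, c0, discQuartic]
  ring

theorem quartic_and_bracket_no_common_root
    {K : Type*} [Field K] [IsAlgClosed K] [CharZero K]
    (P Q B : K[X])
    (hdeg : P.natDegree = 4)
    (hdisc : discQuartic (P.coeff 4) (P.coeff 3) (P.coeff 2) (P.coeff 1) (P.coeff 0) ≠ 0)
    (hQ : Q = C ((1 : K) / 3) * (P * derivative (derivative P))
      - C ((1 : K) / 4) * (derivative P) ^ 2)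
    (hB : B = derivative P * Q - P * derivative Q) :
    ∀ x : K, P.eval x = 0 → B.eval x ≠ 0 := by
  --

  intro x hPx hBx
  have hP'x : (derivative P).eval x = 0 := by
    have hQx : Q.eval x = -(1/4) * ((derivative P).eval x)^2 := by
      rw [hQ]; simp [hPx]
    have hQ'x : B.eval x = -(1/4) * ((derivative P).eval x)^3 := by
      rw [hB]; simp [hPx, hQx]; ring
    rw [hQ'x] at hBx
    field_simp at hBx
    simpa using hBx
  exact hdisc (double_root_disc_zero P x hdeg hPx hP'x)
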